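/- arXiv:1203.4828 — 3 statements merged into one kernel-verified Lean document; each statement's English description precedes it below -/
import Mathlib

section
/- Let η be a generalized fractal string (a locally finite measure on (0,∞) vanishing on (0, x₀) for some x₀ > 0) and define its spectral measure by ν(A) = ∑_{k=1}^∞ η(A/k) for bounded Borel sets A ⊆ (0,∞). Then for all s with Re(s) > max(1, D_η), the Mellin transforms satisfy ∫_0^∞ x^{-s} ν(dx) = (∫_0^∞ x^{-s} η(dx)) · ζ(s). -/
open MeasureTheory Complex

/-- Let `η` be a generalized fractal string: a locally finite measure on `(0,∞)`
(vanishing on `(-∞,0]` and on `(0,x₀)` for some `x₀ > 0`), and let `ν` be its spectral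
measure, `ν(A) = ∑_{k≥1} η(A/k)` (where `x ∈ A/k ↔ kx ∈ A`). Then for all `s` with
`Re s > max(1, D_η)`, where `D_η = inf{σ : ∫ x^{-σ} dη < ∞}`, one has
`∫ x^{-s} dν = (∫ x^{-s} dη) · ζ(s)`. -/
theorem spectral_measure_mellin_transform
    (η ν : Measure ℝ) [IsLocallyFiniteMeasure η]
    (x₀ : ℝ) (hx₀ : 0 < x₀) (hzero : η (Set.Iic 0) = 0) (hvanish : η (Set.Ioo 0 x₀) = 0)
    (hν : ∀ A : Set ℝ, MeasurableSet A →
      ν A = ∑' k : ℕ, η ((fun x : ℝ => ((k : ℝ) + 1) * x) ⁻¹' A))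
    (D : ℝ) (hD : D = sInf {σ : ℝ | Integrable (fun x : ℝ => x ^ (-σ)) η})
    (s : ℂ) (hs : max 1 D < s.re) :
    ∫ x : ℝ, ((x : ℂ) ^ (-s)) ∂ν = (∫ x : ℝ, ((x : ℂ) ^ (-s)) ∂η) * riemannZeta s := by
  have hs1 : 1 < s.re := lt_of_le_of_lt (le_max_left _ _) hs
  set g : ℝ → ℂ := fun x => (x : ℂ) ^ (-s) with hgdef
  have hgm : Measurable g := by
    have : Measurable (fun z : ℂ => z ^ (-s)) := by
      simp only [Complex.cpow_def]
      apply Measurable.ite (measurableSet_eq_fun measurable_id measurable_const)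
      · exact measurable_const
      · exact (Complex.measurable_log.mul measurable_const).cexp
    exact this.comp Complex.measurable_ofReal
  -- a.e. with respect to η, x ≥ x₀
  have hae : ∀ᵐ x ∂η, x₀ ≤ x := by
    rw [ae_iff]
    have h1 : {x : ℝ | ¬ x₀ ≤ x} = Set.Iio x₀ := by ext x; simp [not_le]
    rw [h1]
    refine measure_mono_null (fun x hx => ?_) (measure_union_null hzero hvanish)
    rcases le_or_gt x 0 with h | h
    · exact Or.inl h
    · exact Or.inr ⟨h, hx⟩
  have hmulm : ∀ k : ℕ, Measurable (fun x : ℝ => ((k : ℝ) + 1) * x) :=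
    fun k => measurable_const.mul measurable_id
  have hνeq : ν = Measure.sum (fun k : ℕ => Measure.map (fun x : ℝ => ((k : ℝ) + 1) * x) η) := by
    ext A hA
    rw [hν A hA, Measure.sum_apply _ hA]
    exact tsum_congr fun k => (Measure.map_apply (hmulm k) hA).symm
  set c : ℕ → ℂ := fun k => (((k : ℝ) + 1 : ℝ) : ℂ) ^ (-s) with hcdef
  have hnormc : ∀ k : ℕ, ‖c k‖ = ((k : ℝ) + 1) ^ (-s.re) := by
    intro k
    have hk : (0 : ℝ) < (k : ℝ) + 1 := by positivity
    rw [hcdef, norm_cpow_eq_rpow_re_of_pos hk, neg_re]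
  have hsumc : Summable fun k => ‖c k‖ := by
    have h0 : Summable fun n : ℕ => (n : ℝ) ^ (-s.re) :=
      Real.summable_nat_rpow.mpr (by linarith)
    have h1 : Summable ((fun n : ℕ => (n : ℝ) ^ (-s.re)) ∘ (fun k : ℕ => k + 1)) :=
      h0.comp_injective (add_left_injective 1)
    refine h1.congr fun k => ?_
    simp only [Function.comp_apply, hnormc k]
    push_cast
    ring_nf
  have hkey : ∀ k : ℕ, ∀ᵐ x ∂η, g (((k : ℝ) + 1) * x) = c k * g x := by
    intro k
    filter_upwards [hae] with x hx
    have hxpos : (0 : ℝ) < x := lt_of_lt_of_le hx₀ hx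
    have hk : (0 : ℝ) ≤ (k : ℝ) + 1 := by positivity
    simp only [hgdef, hcdef]
    rw [Complex.ofReal_mul, Complex.mul_cpow_ofReal_nonneg hk hxpos.le]
  have hnormg : ∀ᵐ x ∂η, ‖g x‖ = x ^ (-s.re) := by
    filter_upwards [hae] with x hx
    have hxpos : (0 : ℝ) < x := lt_of_lt_of_le hx₀ hx
    rw [hgdef, norm_cpow_eq_rpow_re_of_pos hxpos, neg_re]
  by_cases hint : Integrable (fun x : ℝ => x ^ (-s.re)) η
  · -- integrable case
    have hgη : Integrable g η := by
      refine (integrable_norm_iff hgm.aestronglyMeasurable).mp ?_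
      exact hint.congr (by filter_upwards [hnormg] with x hx; exact hx.symm)
    -- finiteness of the lintegral of ‖g‖ with respect to ν
    have hC : ∫⁻ x, ‖g x‖₊ ∂η < ⊤ := hgη.2
    have hlint : ∀ k : ℕ, ∫⁻ x, ‖g x‖₊ ∂(Measure.map (fun x : ℝ => ((k : ℝ) + 1) * x) η)
        = (‖c k‖₊ : ENNReal) * ∫⁻ x, ‖g x‖₊ ∂η := by
      intro k
      rw [lintegral_map hgm.nnnorm.coe_nnreal_ennreal (hmulm k)]
      have heq : (fun x : ℝ => (‖g (((k : ℝ) + 1) * x)‖₊ : ENNReal))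
          =ᵐ[η] fun x => (‖c k‖₊ : ENNReal) * ‖g x‖₊ := by
        filter_upwards [hkey k] with x hx
        rw [hx, nnnorm_mul, ENNReal.coe_mul]
      rw [lintegral_congr_ae heq]
      exact lintegral_const_mul _ hgm.nnnorm.coe_nnreal_ennreal
    have hsumnn : Summable fun k => ‖c k‖₊ := by
      rw [← NNReal.summable_coe]
      simpa [coe_nnnorm] using hsumc
    have htop : (∑' k : ℕ, (‖c k‖₊ : ENNReal)) ≠ ⊤ :=
      ENNReal.tsum_coe_ne_top_iff_summable.mpr hsumnn
    have hgν : Integrable g ν := by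
      refine ⟨hgm.aestronglyMeasurable, ?_⟩
      rw [HasFiniteIntegral, hνeq, lintegral_sum_measure]
      calc ∑' k : ℕ, ∫⁻ x, ‖g x‖₊ ∂(Measure.map (fun x : ℝ => ((k : ℝ) + 1) * x) η)
          = ∑' k : ℕ, (‖c k‖₊ : ENNReal) * ∫⁻ x, ‖g x‖₊ ∂η := tsum_congr hlint
        _ = (∑' k : ℕ, (‖c k‖₊ : ENNReal)) * ∫⁻ x, ‖g x‖₊ ∂η := ENNReal.tsum_mul_right
        _ < ⊤ := ENNReal.mul_lt_top htop.lt_top hC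
    -- compute
    have hI : ∀ k : ℕ, ∫ x, g x ∂(Measure.map (fun x : ℝ => ((k : ℝ) + 1) * x) η)
        = c k * ∫ x, g x ∂η := by
      intro k
      rw [integral_map (hmulm k).aemeasurable hgm.aestronglyMeasurable]
      rw [integral_congr_ae (hkey k)]
      exact integral_const_mul _ _
    rw [hνeq] at hgν ⊢
    rw [integral_sum_measure hgν]
    rw [tsum_congr hI, tsum_mul_right]
    rw [mul_comm]
    congr 1
    rw [zeta_eq_tsum_one_div_nat_add_one_cpow hs1]
    refine tsum_congr fun k => ?_
    rw [hcdef]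
    push_cast
    rw [cpow_neg, one_div]
  · -- non-integrable case: both sides are zero
    have hgη : ¬ Integrable g η := by
      intro h
      exact hint (h.norm.congr (by filter_upwards [hnormg] with x hx; exact hx))
    have hle : η ≤ ν := by
      rw [Measure.le_iff]
      intro A hA
      rw [hν A hA]
      have h0 : η A = η ((fun x : ℝ => (((0 : ℕ) : ℝ) + 1) * x) ⁻¹' A) := by
        norm_num
      rw [h0]
      exact ENNReal.le_tsum 0
    have hgν : ¬ Integrable g ν := fun h => hgη (h.mono_measure hle)
    rw [integral_undef hgν, integral_undef hgη, zero_mul]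
end

section
/- For c > 1, the spectral operator on ℍ_c satisfies the operator-valued Euler product: ∑_{n=1}^∞ T_{log n} = ∏_{p prime} (Id − T_{log p})^{-1}, where the infinite product converges in operator norm and each factor (Id − T_{log p})^{-1} = ∑_{k=0}^∞ T_{k log p} is a bounded operator. -/
open MeasureTheory Complex Filter
open scoped ENNReal NNReal

/-- The weighted Hilbert space measure `μ_c(dt) = e^{-2ct} dt` on `ℝ`. -/
noncomputable def weightedMeasure (c : ℝ) : Measure ℝ :=
  volume.withDensity fun t => ENNReal.ofReal (Real.exp (-2 * c * t))

/-- The weighted Hilbert space `ℍ_c = L²(ℝ, e^{-2ct}dt)`. -/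
noncomputable abbrev Hc (c : ℝ) := Lp ℂ 2 (weightedMeasure c)

namespace SpectralAux

variable {c : ℝ}

lemma density_meas : Measurable fun t : ℝ => ENNReal.ofReal (Real.exp (-2 * c * t)) := by
  fun_prop

lemma vol_ac : (volume : Measure ℝ) ≪ weightedMeasure c :=
  withDensity_absolutelyContinuous' density_meas.aemeasurable
    (Filter.Eventually.of_forall fun x => by positivity)

lemma lint_shift (g : ℝ → ℝ≥0∞) (hg : AEMeasurable g volume) (t : ℝ) :
    ∫⁻ u, g (u - t) ∂(weightedMeasure c)
      = ENNReal.ofReal (Real.exp (-2 * c * t)) * ∫⁻ u, g u ∂(weightedMeasure c) := by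
  have hg' : AEMeasurable (fun u => g (u - t)) volume :=
    hg.comp_quasiMeasurePreserving
      (measurePreserving_sub_right volume t).quasiMeasurePreserving
  have hmu : weightedMeasure c
      = volume.withDensity (fun u => ENNReal.ofReal (Real.exp (-2 * c * u))) := rfl
  rw [hmu, lintegral_withDensity_eq_lintegral_mul₀ density_meas.aemeasurable hg',
    lintegral_withDensity_eq_lintegral_mul₀ density_meas.aemeasurable hg,
    ← lintegral_const_mul' _ _ ENNReal.ofReal_ne_top]
  simp only [Pi.mul_apply]
  have step := lintegral_add_right_eq_self (μ := volume)
      (fun u => ENNReal.ofReal (Real.exp (-2 * c * u)) * g (u - t)) t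
  simp only [add_sub_cancel_right] at step
  rw [← step]
  apply lintegral_congr
  intro u
  rw [← mul_assoc, ← ENNReal.ofReal_mul (Real.exp_pos _).le, ← Real.exp_add]
  ring_nf

lemma eLpNorm_shift (f : Hc c) (t : ℝ) :
    eLpNorm (fun u => f (u - t)) 2 (weightedMeasure c)
      = ENNReal.ofReal (Real.exp (-(c * t))) * eLpNorm (f : ℝ → ℂ) 2 (weightedMeasure c) := by
  have hfm : AEMeasurable (fun u => ((‖f u‖₊ : ℝ≥0∞)) ^ (2:ℝ)) volume :=
    ((Lp.aestronglyMeasurable f).aemeasurable.mono_ac vol_ac).enorm.pow_const _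
  have key : ∫⁻ u, ((‖f (u - t)‖₊ : ℝ≥0∞)) ^ (2:ℝ) ∂(weightedMeasure c)
      = ENNReal.ofReal (Real.exp (-2 * c * t))
        * ∫⁻ u, ((‖f u‖₊ : ℝ≥0∞)) ^ (2:ℝ) ∂(weightedMeasure c) :=
    lint_shift _ hfm t
  have h2 : ((2:ℝ≥0∞)).toReal = (2:ℝ) := by simp
  rw [eLpNorm_eq_lintegral_rpow_enorm_toReal (two_ne_zero) (ENNReal.ofNat_ne_top),
    eLpNorm_eq_lintegral_rpow_enorm_toReal (two_ne_zero) (ENNReal.ofNat_ne_top), h2]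
  simp only [enorm_eq_nnnorm]
  rw [key,
    ENNReal.mul_rpow_of_nonneg _ _ (by norm_num : (0:ℝ) ≤ 1/2)]
  congr 1
  rw [ENNReal.ofReal_rpow_of_pos (Real.exp_pos _)]
  congr 1
  rw [← Real.exp_one_rpow (-2*c*t), ← Real.rpow_mul (Real.exp_pos 1).le, Real.exp_one_rpow]
  congr 1
  ring


lemma ae_wm_iff {f g : ℝ → ℂ} :
    f =ᵐ[weightedMeasure c] g ↔ f =ᵐ[volume] g :=
  withDensity_ae_eq density_meas.aemeasurable
    (Filter.Eventually.of_forall fun x => by positivity)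

lemma ae_shift {f g : ℝ → ℂ} (t : ℝ) (h : f =ᵐ[weightedMeasure c] g) :
    (fun u => f (u - t)) =ᵐ[weightedMeasure c] fun u => g (u - t) := by
  rw [ae_wm_iff] at h ⊢
  exact (measurePreserving_sub_right volume t).quasiMeasurePreserving.ae_eq_comp h

section Ops
variable {c : ℝ} (T : ℝ → (Hc c →L[ℂ] Hc c))
variable (hT : ∀ (t : ℝ) (f : Hc c),
      (⇑(T t f) : ℝ → ℂ) =ᵐ[weightedMeasure c] fun u => f (u - t))

include hT

lemma T_norm_apply (t : ℝ) (f : Hc c) : ‖T t f‖ = Real.exp (-(c * t)) * ‖f‖ := by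
  rw [Lp.norm_def, Lp.norm_def, eLpNorm_congr_ae (hT t f), eLpNorm_shift f t,
    ENNReal.toReal_mul, ENNReal.toReal_ofReal (Real.exp_pos _).le]

lemma T_norm_le (t : ℝ) : ‖T t‖ ≤ Real.exp (-(c * t)) := by
  refine ContinuousLinearMap.opNorm_le_bound _ (Real.exp_pos _).le fun f => ?_
  rw [T_norm_apply T hT t f]

lemma T_zero : T 0 = 1 := by
  refine ContinuousLinearMap.ext fun f => Lp.ext ?_
  refine (hT 0 f).trans ?_
  simp only [sub_zero]
  exact Filter.EventuallyEq.rfl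

lemma T_add (s t : ℝ) : T s * T t = T (s + t) := by
  refine ContinuousLinearMap.ext fun f => ?_
  rw [ContinuousLinearMap.mul_apply]
  refine Lp.ext ?_
  have h1 := hT s (T t f)
  have h2 := ae_shift s (hT t f)
  have h3 : (fun u => (f : ℝ → ℂ) (u - s - t)) = fun u => (f : ℝ → ℂ) (u - (s + t)) := by
    funext u; rw [sub_sub]
  refine (h1.trans (h2.trans ?_)).trans (hT (s + t) f).symm
  rw [h3]

end Ops

end SpectralAux


set_option maxHeartbeats 2000000 in
set_option synthInstance.maxHeartbeats 400000 in
/-- For `c > 1`, the spectral operator on `ℍ_c` satisfies the operator-valued Euler product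
`∑_{n≥1} T_{log n} = ∏_{p prime} (Id − T_{log p})⁻¹`, the product being taken over the primes
in increasing order and converging in operator norm; each factor
`(Id − T_{log p})⁻¹ = ∑_{k≥0} T_{k log p}` is a bounded operator, a two-sided inverse of
`Id − T_{log p}`.  Here `T_t` is translation by `t`: `(T_t f)(u) = f(u − t)`. -/
theorem spectral_operator_euler_product (c : ℝ) (hc : 1 < c)
    (T : ℝ → (Hc c →L[ℂ] Hc c))
    (hT : ∀ (t : ℝ) (f : Hc c),
      (⇑(T t f) : ℝ → ℂ) =ᵐ[weightedMeasure c] fun u => f (u - t))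
    (a : Hc c →L[ℂ] Hc c)
    (ha : HasSum (fun n : ℕ => T (Real.log ((n : ℝ) + 1))) a)
    (B : ℕ → (Hc c →L[ℂ] Hc c))
    (hB : ∀ p : ℕ, p.Prime → HasSum (fun k : ℕ => T ((k : ℝ) * Real.log p)) (B p)) :
    (∀ p : ℕ, p.Prime →
      B p * (1 - T (Real.log p)) = 1 ∧ (1 - T (Real.log p)) * B p = 1) ∧
    Tendsto (fun N : ℕ => (((List.range N).filter Nat.Prime).map B).prod)
      atTop (nhds a) := by
  have Tadd : ∀ s t : ℝ, T s * T t = T (s + t) := SpectralAux.T_add T hT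
  have T0 : T 0 = 1 := SpectralAux.T_zero T hT
  constructor
  · -- Part 1 : two-sided inverses
    intro p hp
    have hsum := hB p hp
    have h1 : HasSum (fun k : ℕ => T ((((k : ℕ) + 1 : ℕ) : ℝ) * Real.log p)) (B p - 1) := by
      refine (hasSum_nat_add_iff (f := fun k : ℕ => T ((k : ℝ) * Real.log p)) 1).mpr ?_
      simpa [Finset.sum_range_one, T0] using hsum
    constructor
    · have h2 := hsum.mul_right (T (Real.log p))
      have heq : (fun k : ℕ => T ((k : ℝ) * Real.log p) * T (Real.log p))
          = fun k : ℕ => T ((((k : ℕ) + 1 : ℕ) : ℝ) * Real.log p) := by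
        funext k; rw [Tadd]; congr 1; push_cast; ring
      rw [heq] at h2
      have key : B p - 1 = B p * T (Real.log p) := h1.unique h2
      rw [mul_sub, mul_one, ← key, sub_sub_cancel]
    · have h2 := hsum.mul_left (T (Real.log p))
      have heq : (fun k : ℕ => T (Real.log p) * T ((k : ℝ) * Real.log p))
          = fun k : ℕ => T ((((k : ℕ) + 1 : ℕ) : ℝ) * Real.log p) := by
        funext k; rw [Tadd]; congr 1; push_cast; ring
      rw [heq] at h2
      have key : B p - 1 = T (Real.log p) * B p := h1.unique h2
      rw [sub_mul, one_mul, ← key, sub_sub_cancel]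
  · -- Part 2 : Euler product
    have hcomm₀ : ∀ x ∈ Set.range T, ∀ y ∈ Set.range T, x * y = y * x := by
      rintro _ ⟨s, rfl⟩ _ ⟨t, rfl⟩
      rw [Tadd, Tadd, add_comm]
    set S₀ : Subalgebra ℂ (Hc c →L[ℂ] Hc c) := Algebra.adjoin ℂ (Set.range T) with hS₀
    have hS₀comm : ∀ x y : S₀, x * y = y * x := fun x y => by
      letI := Algebra.adjoinCommRingOfComm ℂ hcomm₀
      exact mul_comm x y
    set S : Subalgebra ℂ (Hc c →L[ℂ] Hc c) := S₀.topologicalClosure with hS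
    have hScomm : ∀ x y : S, x * y = y * x := fun x y => by
      letI := Subalgebra.commRingTopologicalClosure S₀ hS₀comm
      exact mul_comm x y
    letI : NormedCommRing S := { (inferInstance : NormedRing S) with mul_comm := hScomm }
    letI : CompleteSpace S :=
      (Subalgebra.isClosed_topologicalClosure S₀).completeSpace_coe
    have hmem : ∀ t : ℝ, T t ∈ S := fun t =>
      S₀.le_topologicalClosure (Algebra.subset_adjoin ⟨t, rfl⟩)
    set F : ℕ → S := fun n => if h : n = 0 then 0 else ⟨T (Real.log n), hmem _⟩ with hF
    have hF0 : F 0 = 0 := rfl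
    have hF1 : F 1 = 1 := by
      refine Subtype.ext ?_
      simp only [hF, dif_neg one_ne_zero]
      simp [Real.log_one, T0]
    have hFmul : ∀ {m n : ℕ}, Nat.Coprime m n → F (m * n) = F m * F n := by
      intro m n _
      rcases eq_or_ne m 0 with rfl | hm
      · simp [hF]
      rcases eq_or_ne n 0 with rfl | hn
      · simp [hF]
      refine Subtype.ext ?_
      simp only [hF, dif_neg hm, dif_neg hn, dif_neg (mul_ne_zero hm hn),
        MulMemClass.coe_mul]
      rw [Tadd]
      congr 1
      push_cast
      rw [Real.log_mul (Nat.cast_ne_zero.mpr hm) (Nat.cast_ne_zero.mpr hn)]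
    have hnormF : ∀ n : ℕ, ‖F n‖ ≤ (n : ℝ) ^ (-c) := by
      intro n
      rcases eq_or_ne n 0 with rfl | hn
      · simp [hF, Real.zero_rpow (by linarith : -c ≠ 0)]
      · have h1 : ‖F n‖ = ‖T (Real.log n)‖ := by
          simp only [hF, dif_neg hn]; rfl
        rw [h1]
        calc ‖T (Real.log n)‖ ≤ Real.exp (-(c * Real.log n)) :=
              SpectralAux.T_norm_le T hT _
          _ = (n : ℝ) ^ (-c) := by
              rw [Real.rpow_def_of_pos (by positivity)]
              congr 1
              ring
    have hsumnorm : Summable (fun n => ‖F n‖) := by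
      refine Summable.of_nonneg_of_le (fun n => norm_nonneg _) hnormF ?_
      exact Real.summable_nat_rpow.mpr (by linarith)
    have euler := EulerProduct.eulerProduct hF1 hFmul hsumnorm hF0
    have hFsummable : Summable F := hsumnorm.of_norm
    have hcoe : HasSum (fun n => ((F n : Hc c →L[ℂ] Hc c)))
        (((∑' n, F n : S) : Hc c →L[ℂ] Hc c)) :=
      hFsummable.hasSum.map S.val continuous_subtype_val
    have hshifted : HasSum (fun n : ℕ => ((F (n + 1) : Hc c →L[ℂ] Hc c)))
        (((∑' n, F n : S) : Hc c →L[ℂ] Hc c)) := by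
      refine (hasSum_nat_add_iff (f := fun n : ℕ => ((F n : Hc c →L[ℂ] Hc c))) 1).mpr ?_
      simpa [Finset.sum_range_one, hF0] using hcoe
    have hfn : (fun n : ℕ => ((F (n + 1) : Hc c →L[ℂ] Hc c)))
        = fun n : ℕ => T (Real.log ((n : ℝ) + 1)) := by
      funext n
      simp only [hF, dif_neg (Nat.succ_ne_zero n)]
      congr 1
      push_cast
      ring
    rw [hfn] at hshifted
    have hτa : (((∑' n, F n : S) : Hc c →L[ℂ] Hc c)) = a := hshifted.unique ha
    have hfactor : ∀ p : ℕ, p.Prime →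
        (((∑' e : ℕ, F (p ^ e) : S) : Hc c →L[ℂ] Hc c)) = B p := by
      intro p hp
      have hsummF : Summable (fun e : ℕ => F (p ^ e)) :=
        (hsumnorm.comp_injective (Nat.pow_right_injective hp.two_le)).of_norm
      have hcoeP : HasSum (fun e : ℕ => ((F (p ^ e) : Hc c →L[ℂ] Hc c)))
          (((∑' e : ℕ, F (p ^ e) : S) : Hc c →L[ℂ] Hc c)) :=
        hsummF.hasSum.map S.val continuous_subtype_val
      have heq2 : (fun e : ℕ => ((F (p ^ e) : Hc c →L[ℂ] Hc c)))
          = fun e : ℕ => T ((e : ℝ) * Real.log p) := by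
        funext e
        simp only [hF, dif_neg (pow_ne_zero e hp.pos.ne')]
        congr 1
        push_cast
        rw [Real.log_pow]
      rw [heq2] at hcoeP
      exact hcoeP.unique (hB p hp)
    have hmap : Tendsto
        (fun n : ℕ => (((∏ p ∈ n.primesBelow, ∑' e : ℕ, F (p ^ e) : S) : Hc c →L[ℂ] Hc c)))
        atTop (nhds (((∑' n, F n : S) : Hc c →L[ℂ] Hc c))) :=
      (continuous_subtype_val.tendsto _).comp euler
    rw [hτa] at hmap
    refine hmap.congr fun N => ?_
    have h1 : (∏ p ∈ N.primesBelow, (∑' e : ℕ, F (p ^ e)) : S)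
        = (((List.range N).filter Nat.Prime).map
            (fun p => (∑' e : ℕ, F (p ^ e) : S))).prod := rfl
    rw [h1]
    refine Eq.trans (map_list_prod (S.val : S →ₐ[ℂ] (Hc c →L[ℂ] Hc c)) _) ?_
    rw [List.map_map]
    refine congrArg List.prod (List.map_congr_left fun p hp => ?_)
    have hp' : p.Prime := of_decide_eq_true (List.mem_filter.mp hp).2
    exact hfactor p hp'
end

section
/- Let c ∈ ℝ, f ∈ L²(ℝ, e^{-2ct}dt), and suppose f is absolutely continuous with f' ∈ L²(ℝ, e^{-2ct}dt). Then |f(t)| e^{-ct} → 0 as t → +∞ and |f(t)| e^{-ct} → 0 as t → −∞. -/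
open MeasureTheory Complex Filter
open scoped ENNReal

private lemma exp_sq' (x : ℝ) : Real.exp x ^ 2 = Real.exp (2 * x) := by
  rw [sq, ← Real.exp_add]; ring_nf

private lemma tail_tendsto_atTop {φ : ℝ → ℝ} (hφ : Integrable φ (volume : Measure ℝ)) :
    Tendsto (fun t : ℝ => ∫ u in t..(t + 1), φ u) atTop (nhds 0) := by
  have h1 := MeasureTheory.intervalIntegral_tendsto_integral_Ioi 0 hφ.integrableOn
    (tendsto_id (x := atTop))
  have h2 := MeasureTheory.intervalIntegral_tendsto_integral_Ioi 0 hφ.integrableOn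
    (tendsto_atTop_add_const_right atTop 1 tendsto_id)
  have h := h2.sub h1
  rw [sub_self] at h
  refine h.congr fun t => ?_
  simp only [id_eq]
  rw [intervalIntegral.integral_interval_sub_left hφ.intervalIntegrable
    hφ.intervalIntegrable]

private lemma tail_tendsto_atBot {φ : ℝ → ℝ} (hφ : Integrable φ (volume : Measure ℝ)) :
    Tendsto (fun t : ℝ => ∫ u in t..(t + 1), φ u) atBot (nhds 0) := by
  have h1 := MeasureTheory.intervalIntegral_tendsto_integral_Iic 0 hφ.integrableOn
    (tendsto_id (x := atBot))
  have h2 := MeasureTheory.intervalIntegral_tendsto_integral_Iic 0 hφ.integrableOn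
    (tendsto_atBot_add_const_right atBot 1 tendsto_id)
  have h := h1.sub h2
  rw [sub_self] at h
  refine h.congr fun t => ?_
  simp only [id_eq]
  have hadd := intervalIntegral.integral_add_adjacent_intervals
    (a := t) (b := 0) (c := t + 1) hφ.intervalIntegrable hφ.intervalIntegrable
  have hsymm : (∫ u in (0:ℝ)..(t+1), φ u) = -∫ u in (t+1)..(0:ℝ), φ u := by
    rw [intervalIntegral.integral_symm]
  linarith [hadd, hsymm]

set_option maxHeartbeats 1000000 in
/-- Natural boundary conditions on the domain of the infinitesimal shift: if
`f ∈ L²(ℝ, e^{-2ct}dt)` is absolutely continuous (with a.e. derivative `g`, so that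
`f(t) = f(s) + ∫_s^t g(u) du`) and `g ∈ L²(ℝ, e^{-2ct}dt)`, then `|f(t)| e^{-ct} → 0`
as `t → +∞` and `|f(t)| e^{-ct} → 0` as `t → −∞`. -/
theorem boundary_conditions_weighted_sobolev (c : ℝ) (f g : ℝ → ℂ)
    (hf : MemLp f 2 (weightedMeasure c))
    (hg : MemLp g 2 (weightedMeasure c))
    (hac : ∀ s t : ℝ, f t = f s + ∫ u in s..t, g u) :
    Tendsto (fun t : ℝ => ‖f t‖ * Real.exp (-c * t)) atTop (nhds 0) ∧
    Tendsto (fun t : ℝ => ‖f t‖ * Real.exp (-c * t)) atBot (nhds 0) := by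
  -- notation
  set w : ℝ → ℝ≥0∞ := fun t => ENNReal.ofReal (Real.exp (-2 * c * t)) with hw
  have hw_meas : Measurable w := by
    exact (Real.continuous_exp.comp (continuous_const.mul continuous_id)).measurable.ennreal_ofReal
  have hw_lt : ∀ᵐ x ∂(volume : Measure ℝ), w x < ⊤ := ae_of_all _ fun x => ENNReal.ofReal_lt_top
  have hvol_ac : (volume : Measure ℝ) ≪ weightedMeasure c := by
    refine withDensity_absolutelyContinuous' hw_meas.aemeasurable (ae_of_all _ fun x => ?_)
    simp [hw, ENNReal.ofReal_eq_zero, not_le, Real.exp_pos]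
  have hfm : AEStronglyMeasurable f (volume : Measure ℝ) := hf.1.mono_ac hvol_ac
  have hgm : AEStronglyMeasurable g (volume : Measure ℝ) := hg.1.mono_ac hvol_ac
  -- the weighted square functions are integrable w.r.t. Lebesgue measure
  set φ : ℝ → ℝ := fun u => (‖f u‖ * Real.exp (-c * u)) ^ 2 with hφdef
  set ψ : ℝ → ℝ := fun u => (‖g u‖ * Real.exp (-c * u)) ^ 2 with hψdef
  have hsq : ∀ (h : ℝ → ℂ) (u : ℝ),
      (‖h u‖ * Real.exp (-c * u)) ^ 2 = ‖h u‖ ^ 2 * (w u).toReal := by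
    intro h u
    rw [mul_pow, exp_sq', ENNReal.toReal_ofReal (Real.exp_nonneg _)]
    ring_nf
  have hφ : Integrable φ (volume : Measure ℝ) := by
    have h1 : Integrable (fun x => ‖f x‖ ^ 2) (weightedMeasure c) := hf.norm.integrable_sq
    rw [weightedMeasure, integrable_withDensity_iff hw_meas hw_lt] at h1
    exact h1.congr (ae_of_all _ fun u => (hsq f u).symm)
  have hψ : Integrable ψ (volume : Measure ℝ) := by
    have h1 : Integrable (fun x => ‖g x‖ ^ 2) (weightedMeasure c) := hg.norm.integrable_sq
    rw [weightedMeasure, integrable_withDensity_iff hw_meas hw_lt] at h1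
    exact h1.congr (ae_of_all _ fun u => (hsq g u).symm)
  have hφ_nonneg : ∀ u, 0 ≤ φ u := fun u => sq_nonneg _
  have hψ_nonneg : ∀ u, 0 ≤ ψ u := fun u => sq_nonneg _
  -- main pointwise estimate
  have key : ∀ t : ℝ, ‖f t‖ * Real.exp (-c * t) ≤
      (Real.sqrt (∫ u in t..(t + 1), φ u) + Real.sqrt (∫ u in t..(t + 1), ψ u)) *
        Real.exp |c| := by
    intro t
    have ht1 : t ≤ t + 1 := by linarith
    -- rewrite interval integrals as set integrals over `Ioc t (t+1)`
    rw [intervalIntegral.integral_of_le ht1, intervalIntegral.integral_of_le ht1]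
    set A : Set ℝ := Set.Ioc t (t + 1) with hA
    set μt : Measure ℝ := (volume : Measure ℝ).restrict A with hμt
    have hμuniv : μt Set.univ = 1 := by
      rw [hμt, Measure.restrict_apply_univ, hA, Real.volume_Ioc]
      norm_num
    have hne : μt ≠ 0 := by
      intro h0
      rw [h0] at hμuniv
      simp at hμuniv
    -- first moment method: pick `s ∈ A` with `φ s` below the average
    have havg := MeasureTheory.measure_le_average_pos hne hφ.integrableOn
    have havg_eq : (⨍ a, φ a ∂μt) = ∫ u in A, φ u := by
      rw [MeasureTheory.average_eq, measureReal_def, hμuniv]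
      simp
      rfl
    rw [hμt, Measure.restrict_apply' measurableSet_Ioc] at havg
    obtain ⟨s, hsA, hsI⟩ := nonempty_of_measure_ne_zero havg.ne'
    have hts : t < s := hsI.1
    have hst1 : s ≤ t + 1 := hsI.2
    have hφs : φ s ≤ ∫ u in A, φ u := by
      rw [← havg_eq]; exact hsA
    -- integrability of `g` on `A`
    have hexp1 : ∀ u : ℝ, Real.exp (-c * u) * Real.exp (c * u) = 1 := by
      intro u
      rw [← Real.exp_add, neg_mul, neg_add_cancel, Real.exp_zero]
    have hcont2 : Continuous fun u : ℝ => Real.exp (2 * (c * u)) := by fun_prop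
    have hgOn : IntegrableOn g A (volume : Measure ℝ) := by
      have hmaj : Integrable (fun u => (ψ u + Real.exp (2 * (c * u))) / 2)
          ((volume : Measure ℝ).restrict A) := by
        refine Integrable.div_const (hψ.integrableOn.add ?_) 2
        exact hcont2.integrableOn_Ioc
      refine hmaj.mono (hgm.restrict) (ae_of_all _ fun u => ?_)
      have h1 : ‖g u‖ ≤ (ψ u + Real.exp (2 * (c * u))) / 2 := by
        have hsq0 : 0 ≤ (‖g u‖ * Real.exp (-c * u) - Real.exp (c * u)) ^ 2 := sq_nonneg _
        have he2 : Real.exp (2 * (c * u)) = Real.exp (c * u) ^ 2 := (exp_sq' _).symm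
        have hψu : ψ u = (‖g u‖ * Real.exp (-c * u)) ^ 2 := rfl
        nlinarith [hexp1 u, Real.exp_nonneg (c * u), Real.exp_nonneg (-c * u),
          norm_nonneg (g u)]
      calc ‖g u‖ ≤ (ψ u + Real.exp (2 * (c * u))) / 2 := h1
        _ ≤ ‖(ψ u + Real.exp (2 * (c * u))) / 2‖ := le_abs_self _
    -- basic bound `‖f t‖ ≤ ‖f s‖ + ∫_A ‖g‖`
    have hfb : ‖f t‖ ≤ ‖f s‖ + ∫ u in A, ‖g u‖ := by
      have hft : f t = f s + ∫ u in s..t, g u := hac s t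
      have h1 : ‖f t‖ ≤ ‖f s‖ + ‖∫ u in s..t, g u‖ := by
        rw [hft]; exact norm_add_le _ _
      have h2 : ‖∫ u in s..t, g u‖ = ‖∫ u in Set.Ioc t s, g u‖ := by
        rw [intervalIntegral.integral_symm, norm_neg,
          intervalIntegral.integral_of_le hts.le]
      have h3 : ‖∫ u in Set.Ioc t s, g u‖ ≤ ∫ u in Set.Ioc t s, ‖g u‖ :=
        norm_integral_le_integral_norm _
      have h4 : (∫ u in Set.Ioc t s, ‖g u‖) ≤ ∫ u in A, ‖g u‖ := by
        refine setIntegral_mono_set hgOn.norm (ae_of_all _ fun u => norm_nonneg _) ?_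
        exact HasSubset.Subset.eventuallyLE (Set.Ioc_subset_Ioc_right hst1)
      linarith
    -- Cauchy–Schwarz bound for `∫_A ‖g u‖`
    have hCSfull : (∫ u in A, ‖g u‖) ≤
        Real.sqrt (∫ u in A, ψ u) * Real.exp (c * t + |c|) := by
      set a : ℝ → ℝ := fun u => ‖g u‖ * Real.exp (-c * u) with ha
      set b : ℝ → ℝ := fun u => Real.exp (c * u) with hb
      have hb_cont : Continuous b := by fun_prop
      have hma : MemLp a (ENNReal.ofReal (2:ℝ)) μt := by
        rw [show (ENNReal.ofReal (2:ℝ)) = 2 by norm_num]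
        refine (memLp_two_iff_integrable_sq ?_).mpr ?_
        · refine AEStronglyMeasurable.restrict (hgm.norm.mul ?_)
          exact (Continuous.aestronglyMeasurable (by fun_prop))
        · exact hψ.integrableOn
      have hmb : MemLp b (ENNReal.ofReal (2:ℝ)) μt := by
        rw [show (ENNReal.ofReal (2:ℝ)) = 2 by norm_num]
        refine (memLp_two_iff_integrable_sq hb_cont.aestronglyMeasurable.restrict).mpr ?_
        have : Integrable (fun u => Real.exp (2 * (c * u))) μt :=
          hcont2.integrableOn_Ioc
        refine this.congr (ae_of_all _ fun u => ?_)
        show Real.exp (2 * (c * u)) = Real.exp (c * u) ^ 2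
        exact (exp_sq' _).symm
      have hCS := integral_mul_le_Lp_mul_Lq_of_nonneg
        (Real.HolderConjugate.two_two : (2:ℝ).HolderConjugate 2)
        (ae_of_all _ fun u => mul_nonneg (norm_nonneg _) (Real.exp_nonneg _))
        (ae_of_all _ fun u => Real.exp_nonneg _) hma hmb
      have hLHS : (∫ u, a u * b u ∂μt) = ∫ u in A, ‖g u‖ := by
        refine integral_congr_ae (ae_of_all _ fun u => ?_)
        show a u * b u = ‖g u‖
        rw [show a u * b u = ‖g u‖ * (Real.exp (-c * u) * Real.exp (c * u)) from by ring,
          hexp1 u, mul_one]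
      have hRa : (∫ u, a u ^ (2:ℝ) ∂μt) = ∫ u in A, ψ u := by
        refine integral_congr_ae (ae_of_all _ fun u => ?_)
        show a u ^ (2:ℝ) = ψ u
        rw [show ((2:ℝ)) = ((2:ℕ):ℝ) by norm_num, Real.rpow_natCast]
      have hRb_le : (∫ u, b u ^ (2:ℝ) ∂μt) ≤ Real.exp (2 * (c * t + |c|)) := by
        have heq : (∫ u, b u ^ (2:ℝ) ∂μt) = ∫ u in A, Real.exp (2 * (c * u)) := by
          refine integral_congr_ae (ae_of_all _ fun u => ?_)
          show b u ^ (2:ℝ) = Real.exp (2 * (c * u))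
          rw [show ((2:ℝ)) = ((2:ℕ):ℝ) by norm_num, Real.rpow_natCast]
          exact exp_sq' _
        rw [heq]
        have hmono : (∫ u in A, Real.exp (2 * (c * u))) ≤
            ∫ (_ : ℝ) in A, Real.exp (2 * (c * t + |c|)) := by
          refine setIntegral_mono_on
            hcont2.integrableOn_Ioc
            ((integrableOn_const_iff).mpr (Or.inr (by rw [hA, Real.volume_Ioc]; norm_num)))
            measurableSet_Ioc fun u hu => ?_
          refine Real.exp_le_exp.mpr ?_
          have h1 : t < u := hu.1
          have h2 : u ≤ t + 1 := hu.2
          nlinarith [le_abs_self c, neg_abs_le c]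
        have hconst : (∫ (_ : ℝ) in A, Real.exp (2 * (c * t + |c|))) =
            Real.exp (2 * (c * t + |c|)) := by
          rw [setIntegral_const, hA, Real.volume_real_Ioc]
          norm_num
        linarith
      have hsqrt_b : (∫ u, b u ^ (2:ℝ) ∂μt) ^ (1/(2:ℝ)) ≤ Real.exp (c * t + |c|) := by
        rw [← Real.sqrt_eq_rpow]
        have h0 : Real.sqrt (Real.exp (2 * (c * t + |c|))) = Real.exp (c * t + |c|) := by
          rw [← exp_sq', Real.sqrt_sq (Real.exp_nonneg _)]
        rw [← h0]
        exact Real.sqrt_le_sqrt hRb_le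
      calc (∫ u in A, ‖g u‖) = ∫ u, a u * b u ∂μt := hLHS.symm
        _ ≤ (∫ u, a u ^ (2:ℝ) ∂μt) ^ (1/(2:ℝ)) * (∫ u, b u ^ (2:ℝ) ∂μt) ^ (1/(2:ℝ)) := hCS
        _ ≤ Real.sqrt (∫ u in A, ψ u) * Real.exp (c * t + |c|) := by
            refine mul_le_mul ?_ hsqrt_b (Real.rpow_nonneg ?_ _) (Real.sqrt_nonneg _)
            · rw [hRa, ← Real.sqrt_eq_rpow]
            · exact integral_nonneg fun u => Real.rpow_nonneg (Real.exp_nonneg _) _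
    -- term 1: `‖f s‖ e^{-ct} ≤ √(∫_A φ) e^{|c|}`
    have hterm1 : ‖f s‖ * Real.exp (-c * t) ≤
        Real.sqrt (∫ u in A, φ u) * Real.exp |c| := by
      have h1 : ‖f s‖ * Real.exp (-c * s) = Real.sqrt (φ s) :=
        (Real.sqrt_sq (mul_nonneg (norm_nonneg _) (Real.exp_nonneg _))).symm
      have h2 : Real.exp (-c * t) = Real.exp (-c * s) * Real.exp (c * (s - t)) := by
        rw [← Real.exp_add]; ring_nf
      have h3 : Real.exp (c * (s - t)) ≤ Real.exp |c| := by
        refine Real.exp_le_exp.mpr ?_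
        nlinarith [le_abs_self c, neg_abs_le c]
      calc ‖f s‖ * Real.exp (-c * t) = (‖f s‖ * Real.exp (-c * s)) * Real.exp (c * (s - t)) := by
            rw [h2]; ring
        _ = Real.sqrt (φ s) * Real.exp (c * (s - t)) := by rw [h1]
        _ ≤ Real.sqrt (∫ u in A, φ u) * Real.exp |c| :=
            mul_le_mul (Real.sqrt_le_sqrt hφs) h3 (Real.exp_nonneg _) (Real.sqrt_nonneg _)
    -- term 2
    have hterm2 : (∫ u in A, ‖g u‖) * Real.exp (-c * t) ≤
        Real.sqrt (∫ u in A, ψ u) * Real.exp |c| := by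
      have hpos : (0:ℝ) ≤ Real.exp (-c * t) := Real.exp_nonneg _
      have h1 : (∫ u in A, ‖g u‖) * Real.exp (-c * t) ≤
          (Real.sqrt (∫ u in A, ψ u) * Real.exp (c * t + |c|)) * Real.exp (-c * t) :=
        mul_le_mul_of_nonneg_right hCSfull hpos
      have h2 : Real.exp (c * t + |c|) * Real.exp (-c * t) = Real.exp |c| := by
        rw [← Real.exp_add]; ring_nf
      calc (∫ u in A, ‖g u‖) * Real.exp (-c * t) ≤
          (Real.sqrt (∫ u in A, ψ u) * Real.exp (c * t + |c|)) * Real.exp (-c * t) := h1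
        _ = Real.sqrt (∫ u in A, ψ u) * Real.exp |c| := by rw [mul_assoc, h2]
    -- combine
    have habs : ‖f t‖ = ‖f t‖ := rfl
    have hmain : ‖f t‖ * Real.exp (-c * t) ≤
        (‖f s‖ + ∫ u in A, ‖g u‖) * Real.exp (-c * t) := by
      rw [habs]
      exact mul_le_mul_of_nonneg_right hfb (Real.exp_nonneg _)
    calc ‖f t‖ * Real.exp (-c * t) ≤
        (‖f s‖ + ∫ u in A, ‖g u‖) * Real.exp (-c * t) := hmain
      _ = ‖f s‖ * Real.exp (-c * t) + (∫ u in A, ‖g u‖) * Real.exp (-c * t) := by ring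
      _ ≤ Real.sqrt (∫ u in A, φ u) * Real.exp |c| +
          Real.sqrt (∫ u in A, ψ u) * Real.exp |c| := add_le_add hterm1 hterm2
      _ = (Real.sqrt (∫ u in A, φ u) + Real.sqrt (∫ u in A, ψ u)) * Real.exp |c| := by ring
  -- conclude by squeezing
  have hb_top : Tendsto (fun t : ℝ => (Real.sqrt (∫ u in t..(t + 1), φ u) +
      Real.sqrt (∫ u in t..(t + 1), ψ u)) * Real.exp |c|) atTop (nhds 0) := by
    have h := (((tail_tendsto_atTop hφ).sqrt).add ((tail_tendsto_atTop hψ).sqrt)).mul_const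
      (Real.exp |c|)
    simpa using h
  have hb_bot : Tendsto (fun t : ℝ => (Real.sqrt (∫ u in t..(t + 1), φ u) +
      Real.sqrt (∫ u in t..(t + 1), ψ u)) * Real.exp |c|) atBot (nhds 0) := by
    have h := (((tail_tendsto_atBot hφ).sqrt).add ((tail_tendsto_atBot hψ).sqrt)).mul_const
      (Real.exp |c|)
    simpa using h
  have hnonneg : ∀ t : ℝ, 0 ≤ ‖f t‖ * Real.exp (-c * t) := fun t =>
    mul_nonneg (norm_nonneg _) (Real.exp_nonneg _)
  exact ⟨squeeze_zero hnonneg key hb_top, squeeze_zero hnonneg key hb_bot⟩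
end
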